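/- arXiv:1112.1771 — 2 statements merged into one kernel-verified Lean document; each statement's English description precedes it below -/
import Mathlib

section
/- With B the k×k bidiagonal matrix as above, for every η ≥ 1 and every tail sum starting at index η, the series ∑_{j≥η} (B^j)_{1,k} z^j can be written as a finite sum ∑_{i=0}^{k-1} p_i z^{q_i}/(1-z)^i where each p_i is a nonnegative integer, each q_i is a positive integer, and p_{k-1} = 1. -/
lemma matpow_entry (k : ℕ) (hk : 2 ≤ k)
    (B : Matrix (Fin k) (Fin k) ℚ)
    (hB : ∀ i j : Fin k, B i j =
      if (i = j ∧ 1 ≤ (j : ℕ)) ∨ ((i : ℕ) + 1 = (j : ℕ)) then 1 else 0)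
    (j : ℕ) (c : Fin k) :
    (B ^ j) ⟨0, by omega⟩ c =
      if (c : ℕ) = 0 then (if j = 0 then 1 else 0)
      else if j = 0 then 0 else (((j-1).choose ((c : ℕ)-1) : ℕ) : ℚ) := by
  induction j generalizing c with
  | zero =>
    simp only [pow_zero, Matrix.one_apply]
    by_cases hc : (c : ℕ) = 0
    · have h0 : (⟨0, by omega⟩ : Fin k) = c := by apply Fin.ext; simpa using hc.symm
      simp [h0, hc]
    · have h0 : ¬ (⟨0, by omega⟩ : Fin k) = c := by
        intro h; apply hc; rw [← h]
      simp [h0, hc]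
  | succ j ih =>
    rw [pow_succ, Matrix.mul_apply]
    by_cases hc : (c : ℕ) = 0
    · have hz : ∀ b : Fin k, (B ^ j) ⟨0, by omega⟩ b * B b c = 0 := by
        intro b
        rw [hB b c, if_neg, mul_zero]
        rintro (⟨rfl, h1⟩ | h2) <;> omega
      rw [Finset.sum_congr rfl (fun b _ => hz b), Finset.sum_const_zero,
        if_pos hc, if_neg (by omega)]
    · have hc1 : 1 ≤ (c : ℕ) := by omega
      have hc1k : (c : ℕ) - 1 < k := by omega
      have hpt : ∀ b : Fin k, (B ^ j) ⟨0, by omega⟩ b * B b c =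
          (if c = b then (B ^ j) ⟨0, by omega⟩ c else 0) +
          (if (⟨(c : ℕ) - 1, hc1k⟩ : Fin k) = b
            then (B ^ j) ⟨0, by omega⟩ ⟨(c : ℕ) - 1, hc1k⟩ else 0) := by
        intro b
        rw [hB b c]
        by_cases h1 : b = c
        · subst h1
          have hne : ¬ ((⟨(b : ℕ) - 1, hc1k⟩ : Fin k) = b) := by
            intro h
            have h5 : (b : ℕ) - 1 = (b : ℕ) := congrArg Fin.val h
            omega
          rw [if_pos (Or.inl ⟨rfl, hc1⟩), mul_one, if_pos rfl, if_neg hne]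
          ring
        · by_cases h2 : (b : ℕ) + 1 = (c : ℕ)
          · have hb : (⟨(c : ℕ) - 1, hc1k⟩ : Fin k) = b := by
              apply Fin.ext; simp; omega
            rw [if_pos (Or.inr h2), mul_one, if_neg (fun h => h1 h.symm), if_pos hb, ← hb]
            ring
          · have hb2 : ¬ ((⟨(c : ℕ) - 1, hc1k⟩ : Fin k) = b) := by
              intro h
              have h5 : (c : ℕ) - 1 = (b : ℕ) := congrArg Fin.val h
              omega
            rw [if_neg (by rintro (⟨rfl, _⟩ | h) <;> [exact h1 rfl; exact h2 h]), mul_zero,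
              if_neg (fun h => h1 h.symm), if_neg hb2]
            ring
      rw [Finset.sum_congr rfl (fun b _ => hpt b), Finset.sum_add_distrib,
        Finset.sum_ite_eq, Finset.sum_ite_eq, if_pos (Finset.mem_univ _),
        if_pos (Finset.mem_univ _), ih, ih]
      have hvv : ((⟨(c : ℕ) - 1, hc1k⟩ : Fin k) : ℕ) = (c : ℕ) - 1 := rfl
      rw [hvv]
      by_cases hj : j = 0
      · subst hj
        by_cases hcc : (c : ℕ) - 1 = 0
        · simp [hc, hcc]
        · simp [hc, hcc, Nat.choose_eq_zero_of_lt (show 0 < (c:ℕ)-1 by omega)]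
      · by_cases hcc : (c : ℕ) - 1 = 0
        · simp [hc, hcc, hj]
        · have hm : (c:ℕ) - 1 - 1 + 1 = (c:ℕ) - 1 := by omega
          have key : (j + 1 - 1).choose ((c:ℕ)-1) =
              (j-1).choose ((c:ℕ)-1) + (j-1).choose ((c:ℕ)-1-1) := by
            rw [show j + 1 - 1 = (j-1)+1 by omega, ← hm, Nat.choose_succ_succ]
            simp only [Nat.succ_eq_add_one, hm]
            omega
          simp only [if_neg hc, if_neg hj, if_neg hcc, if_neg (Nat.succ_ne_zero j)]
          rw [key]
          push_cast
          ring

lemma vand_aux (k η n : ℕ) (hk : 2 ≤ k) (hη : 1 ≤ η) (hn : η ≤ n) :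
    ∑ j ∈ Finset.range (k-1), (η-1).choose (k-2-j) * (n-η).choose j
      = (n-1).choose (k-2) := by
  have h1 : n - 1 = (η-1) + (n-η) := by omega
  rw [h1, Nat.add_choose_eq,
    Finset.Nat.sum_antidiagonal_eq_sum_range_succ
      (fun a b => (η-1).choose a * (n-η).choose b) (k-2),
    show (k-2).succ = k-1 by omega,
    ← Finset.sum_range_reflect]
  apply Finset.sum_congr rfl
  intro j hj
  simp only [Finset.mem_range] at hj
  rw [show k - 1 - 1 - j = k-2-j by omega,
    show k - 2 - (k - 2 - j) = j by omega]

open PowerSeries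
theorem stmt_2 (k : ℕ) (hk : 2 ≤ k)
    (B : Matrix (Fin k) (Fin k) ℚ)
    (hB : ∀ i j : Fin k, B i j =
      if (i = j ∧ 1 ≤ (j : ℕ)) ∨ ((i : ℕ) + 1 = (j : ℕ)) then 1 else 0)
    (η : ℕ) (hη : 1 ≤ η) :
    ∃ p q : Fin k → ℕ, (∀ i, 1 ≤ q i) ∧ p ⟨k - 1, by omega⟩ = 1 ∧
      (1 - PowerSeries.X) ^ (k - 1) *
          PowerSeries.mk (fun j =>
            if η ≤ j then (B ^ j) ⟨0, by omega⟩ ⟨k - 1, by omega⟩ else 0) =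
        ∑ i : Fin k, (p i : PowerSeries ℚ) * PowerSeries.X ^ (q i) *
          (1 - PowerSeries.X) ^ (k - 1 - (i : ℕ)) := by
  refine ⟨fun i => if (i:ℕ) = 0 then 0 else (η-1).choose (k-1-(i:ℕ)),
    fun i => if (i:ℕ) = 0 then 1 else η + (i:ℕ) - 1, ?_, ?_, ?_⟩
  · intro i
    dsimp only
    split_ifs with h
    · exact le_refl 1
    · omega
  · have h1 : ((⟨k-1, by omega⟩ : Fin k) : ℕ) = k - 1 := rfl
    simp only [h1, if_neg (show ¬ k-1 = 0 by omega), Nat.sub_self,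
      Nat.choose_zero_right]
  · have key : PowerSeries.mk (fun j =>
        if η ≤ j then (B ^ j) ⟨0, by omega⟩ ⟨k - 1, by omega⟩ else 0) =
        ∑ i : Fin k,
          (((if (i:ℕ) = 0 then 0 else (η-1).choose (k-1-(i:ℕ)) : ℕ) : ℚ⟦X⟧) *
            PowerSeries.X ^ (if (i:ℕ) = 0 then 1 else η + (i:ℕ) - 1) *
            (invOneSubPow ℚ (i:ℕ)).val) := by
      ext n
      set G : ℕ → ℚ := fun m => if m = 0 then 0 else
        ((η-1).choose (k-1-m) : ℚ) *
          (if η + m - 1 ≤ n then ((n - η).choose (m-1) : ℚ) else 0) with hG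
      have hterm : ∀ i : Fin k,
          (PowerSeries.coeff (R := ℚ) n)
            ((((if (i:ℕ) = 0 then 0 else (η-1).choose (k-1-(i:ℕ)) : ℕ) : ℚ⟦X⟧) *
              PowerSeries.X ^ (if (i:ℕ) = 0 then 1 else η + (i:ℕ) - 1) *
              (invOneSubPow ℚ (i:ℕ)).val)) = G (i:ℕ) := by
        intro i
        by_cases h0 : (i:ℕ) = 0
        · simp [h0, hG]
        · have hipos : 0 < (i:ℕ) := by omega
          rw [if_neg h0, if_neg h0]
          simp only [hG, if_neg h0]
          rw [← map_natCast (PowerSeries.C (R := ℚ)) ((η-1).choose (k-1-(i:ℕ))),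
            mul_assoc, PowerSeries.coeff_C_mul,
            invOneSubPow_val_eq_mk_sub_one_add_choose_of_pos ℚ (i:ℕ) hipos,
            PowerSeries.coeff_X_pow_mul']
          split_ifs with hq
          · rw [PowerSeries.coeff_mk,
              show (i:ℕ)-1 + (n - (η + (i:ℕ) - 1)) = n - η by omega]
          · rw [mul_zero]
      rw [PowerSeries.coeff_mk, map_sum,
        Finset.sum_congr rfl (fun i _ => hterm i),
        Fin.sum_univ_eq_sum_range G k]
      by_cases hn : η ≤ n
      · rw [if_pos hn, matpow_entry k hk B hB n ⟨k-1, by omega⟩]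
        have hzk : ((⟨k-1, by omega⟩ : Fin k) : ℕ) = k - 1 := rfl
        rw [hzk, if_neg (show ¬ k - 1 = 0 by omega), if_neg (show ¬ n = 0 by omega)]
        rw [show k = k-1+1 by omega, Finset.sum_range_succ' G (k-1)]
        have hG0 : G 0 = 0 := by simp [hG]
        have hGj : ∀ j ∈ Finset.range (k-1), G (j+1) =
            (((η-1).choose (k-2-j) * (n-η).choose j : ℕ) : ℚ) := by
          intro j hj
          simp only [Finset.mem_range] at hj
          simp only [hG, if_neg (Nat.succ_ne_zero j)]
          rw [show k - 1 - (j+1) = k-2-j by omega,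
            show η + (j+1) - 1 = η + j by omega]
          by_cases hqn : η + j ≤ n
          · rw [if_pos hqn, show j + 1 - 1 = j from rfl]
            push_cast
            ring
          · rw [if_neg hqn, mul_zero,
              Nat.choose_eq_zero_of_lt (show n - η < j by omega)]
            push_cast
            ring
        rw [Finset.sum_congr rfl hGj, hG0, add_zero, ← Nat.cast_sum,
          vand_aux k η n hk hη hn, show k - 1 + 1 - 1 - 1 = k - 2 by omega]
      · rw [if_neg hn]
        symm
        apply Finset.sum_eq_zero
        intro m hm
        simp only [hG]
        by_cases h0 : m = 0
        · rw [if_pos h0]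
        · rw [if_neg h0, if_neg (show ¬ η + m - 1 ≤ n by omega), mul_zero]
    rw [key, Finset.mul_sum]
    apply Finset.sum_congr rfl
    intro i _
    have hi : (i:ℕ) ≤ k - 1 := by omega
    have hsplit : ((1:ℚ⟦X⟧) - PowerSeries.X)^(k-1)
        = (1 - PowerSeries.X)^(k-1-(i:ℕ)) * (1 - PowerSeries.X)^(i:ℕ) := by
      rw [← pow_add, Nat.sub_add_cancel hi]
    have hunit : ((1:ℚ⟦X⟧) - PowerSeries.X)^(i:ℕ) * (invOneSubPow ℚ (i:ℕ)).val = 1 := by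
      rw [← invOneSubPow_inv_eq_one_sub_pow]
      exact (invOneSubPow ℚ (i:ℕ)).inv_val
    rw [hsplit,
      show ∀ A' Bi P V : ℚ⟦X⟧, A' * Bi * (P * V) = P * A' * (Bi * V) from
        fun _ _ _ _ => by ring,
      hunit, mul_one]
end

section
/- In ℤ^r with the ℓ¹ metric, the generating function ∑_{n≥0} c_n z^n of the sphere sizes c_n = #{v ∈ ℤ^r : ‖v‖₁ = n} equals (1+z)^r/(1−z)^r in ℚ⟦z⟧; equivalently (1−z)^r ∑_n #{v : ‖v‖₁ = n} z^n = (1+z)^r. -/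
open PowerSeries Finset

noncomputable def Sph (r n : ℕ) : Finset (Fin r → ℤ) :=
  (Fintype.piFinset fun _ => Finset.Icc (-(n:ℤ)) n).filter (fun v => ∑ i, |v i| = (n:ℤ))

lemma mem_Sph {r n : ℕ} {v : Fin r → ℤ} : v ∈ Sph r n ↔ ∑ i, |v i| = (n:ℤ) := by
  constructor
  · intro h; exact (Finset.mem_filter.mp h).2
  · intro h
    refine Finset.mem_filter.mpr ⟨?_, h⟩
    refine Fintype.mem_piFinset.mpr fun i => ?_
    rw [Finset.mem_Icc, ← abs_le, ← h]
    exact Finset.single_le_sum (f := fun j => |v j|) (fun j _ => abs_nonneg _) (Finset.mem_univ i)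

def aCnt (m : ℕ) : ℕ := if m = 0 then 1 else 2

def Aset (m : ℕ) : Finset ℤ := if m = 0 then {0} else {(m:ℤ), -(m:ℤ)}

lemma mem_Aset {m : ℕ} {x : ℤ} : x ∈ Aset m ↔ |x| = (m:ℤ) := by
  unfold Aset
  split_ifs with h
  · subst h; simp [abs_eq_zero]
  · have hm : (0:ℤ) < (m:ℤ) := by exact_mod_cast Nat.pos_of_ne_zero h
    simp only [Finset.mem_insert, Finset.mem_singleton]
    rw [abs_eq hm.le]

lemma card_Aset (m : ℕ) : (Aset m).card = aCnt m := by
  unfold Aset aCnt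
  split_ifs with h
  · simp
  · have hm : ((m:ℤ)) ≠ -(m:ℤ) := by
      have : (0:ℤ) < (m:ℤ) := by exact_mod_cast Nat.pos_of_ne_zero h
      omega
    rw [Finset.card_insert_of_notMem (by simpa using hm), Finset.card_singleton]

lemma Sph_zero (n : ℕ) : (Sph 0 n).card = if n = 0 then 1 else 0 := by
  split_ifs with h
  · subst h
    rw [Finset.card_eq_one]
    exact ⟨fun i => 0, by ext v; simp [mem_Sph, Subsingleton.elim v fun _ => 0]⟩
  · rw [Finset.card_eq_zero]
    ext v
    simp [mem_Sph]
    omega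

lemma Sph_succ (r n : ℕ) :
    Sph (r+1) n = (Finset.range (n+1)).biUnion
      (fun k => ((Aset k) ×ˢ (Sph r (n-k))).image fun p => Fin.cons p.1 p.2) := by
  ext v
  simp only [Finset.mem_biUnion, Finset.mem_range, Finset.mem_image, Finset.mem_product,
    mem_Sph, Prod.exists]
  constructor
  · intro hv
    have hle : |v 0| ≤ (n:ℤ) := by
      rw [← hv]
      exact Finset.single_le_sum (f := fun j => |v j|) (fun j _ => abs_nonneg _)
        (Finset.mem_univ 0)
    have habs : |v 0| = ((v 0).natAbs : ℤ) := (Int.abs_eq_natAbs _)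
    have h2 : (v 0).natAbs ≤ n := by omega
    refine ⟨(v 0).natAbs, by omega, v 0, Fin.tail v, ⟨mem_Aset.mpr habs, ?_⟩,
      Fin.cons_self_tail v⟩
    have hsum := Fin.sum_univ_succ (f := fun i => |v i|)
    have : ∑ i : Fin r, |Fin.tail v i| = (n:ℤ) - (v 0).natAbs := by
      simp only [Fin.tail]
      rw [hv] at hsum
      omega
    rw [this]
    push_cast [h2]
    ring
  · rintro ⟨k, hk, x, w, ⟨hx, hw⟩, rfl⟩
    rw [mem_Aset] at hx
    rw [Fin.sum_univ_succ]
    simp only [Fin.cons_zero, Fin.cons_succ]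
    rw [hx, hw]
    have : k ≤ n := by omega
    push_cast [this]
    ring

lemma Sph_succ_card (r n : ℕ) :
    (Sph (r+1) n).card = ∑ k ∈ Finset.range (n+1), aCnt k * (Sph r (n-k)).card := by
  rw [Sph_succ, Finset.card_biUnion]
  · refine Finset.sum_congr rfl fun k _ => ?_
    rw [Finset.card_image_of_injective _ ?_, Finset.card_product, card_Aset]
    intro p q hpq
    have h0 := congrFun hpq 0
    simp only [Fin.cons_zero] at h0
    have ht := congrArg Fin.tail hpq
    simp only [Fin.tail_cons] at ht
    exact Prod.ext h0 ht
  · intro k _ l _ hkl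
    refine Finset.disjoint_left.mpr ?_
    rintro v hv hv'
    simp only [Finset.mem_image, Finset.mem_product, Prod.exists] at hv hv'
    obtain ⟨x, w, ⟨hx, -⟩, rfl⟩ := hv
    obtain ⟨x', w', ⟨hx', -⟩, heq⟩ := hv'
    rw [mem_Aset] at hx hx'
    have h0 := congrFun heq 0
    simp only [Fin.cons_zero] at h0
    rw [h0] at hx'
    have hc : k = l := by exact_mod_cast hx.symm.trans hx'
    exact hkl hc

lemma geom_a : (1 - PowerSeries.X) * PowerSeries.mk (fun n => (aCnt n : ℚ)) =
    1 + PowerSeries.X := by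
  ext n
  rw [sub_mul, one_mul, map_sub, map_add]
  match n with
  | 0 => simp [aCnt]
  | 1 => simp [PowerSeries.coeff_succ_X_mul, aCnt, PowerSeries.coeff_one]; norm_num
  | (m+2) => simp [PowerSeries.coeff_succ_X_mul, aCnt, PowerSeries.coeff_one,
      PowerSeries.coeff_X]

lemma conv (r : ℕ) : PowerSeries.mk (fun n => ((Sph (r+1) n).card : ℚ)) =
    PowerSeries.mk (fun n => (aCnt n : ℚ)) * PowerSeries.mk (fun n => ((Sph r n).card : ℚ)) := by
  ext n
  rw [PowerSeries.coeff_mul, PowerSeries.coeff_mk, Finset.Nat.sum_antidiagonal_eq_sum_range_succ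
    (f := fun a b => (PowerSeries.coeff a) (PowerSeries.mk fun n => (aCnt n : ℚ)) *
      (PowerSeries.coeff b) (PowerSeries.mk fun n => ((Sph r n).card : ℚ)))]
  simp only [PowerSeries.coeff_mk]
  rw [Sph_succ_card]
  push_cast
  rfl

lemma main_id (r : ℕ) : (1 - PowerSeries.X) ^ r *
    PowerSeries.mk (fun n => ((Sph r n).card : ℚ)) = (1 + PowerSeries.X) ^ r := by
  induction r with
  | zero =>
    simp only [pow_zero, one_mul]
    ext n
    rw [PowerSeries.coeff_mk, Sph_zero, PowerSeries.coeff_one]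
    split_ifs <;> simp
  | succ r ih =>
    rw [conv, pow_succ, pow_succ]
    calc (1 - PowerSeries.X) ^ r * (1 - PowerSeries.X) *
          (PowerSeries.mk (fun n => (aCnt n : ℚ)) *
            PowerSeries.mk (fun n => ((Sph r n).card : ℚ)))
        = ((1 - PowerSeries.X) ^ r * PowerSeries.mk (fun n => ((Sph r n).card : ℚ))) *
          ((1 - PowerSeries.X) * PowerSeries.mk (fun n => (aCnt n : ℚ))) := by ring
      _ = (1 + PowerSeries.X) ^ r * (1 + PowerSeries.X) := by rw [ih, geom_a]

theorem stmt_12 (r : ℕ) (c : ℕ → ℕ)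
    (hc : ∀ n, c n = Set.ncard {v : Fin r → ℤ | ∑ i, |v i| = (n : ℤ)}) :
    (1 - PowerSeries.X) ^ r * PowerSeries.mk (fun n => (c n : ℚ)) =
      (1 + PowerSeries.X) ^ r := by
  have hset : ∀ n : ℕ, {v : Fin r → ℤ | ∑ i, |v i| = (n : ℤ)} = ↑(Sph r n) := by
    intro n; ext v; simp [mem_Sph]
  have hcn : ∀ n, c n = (Sph r n).card := by
    intro n; rw [hc n, hset n, Set.ncard_coe_finset]
  have : (fun n => (c n : ℚ)) = fun n => ((Sph r n).card : ℚ) := by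
    funext n; rw [hcn]
  rw [this]
  exact main_id r
end
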